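/- Let ι be an index set and ℓ : ι → ℝ a function with ℓ(i) > 0 for all i, such that for every real x the set {i ∈ ι | ℓ(i) ≤ x} is finite and ι is infinite. For x > 1 define π(x) = #{i ∈ ι | e^{ℓ(i)} ≤ x} and define the Chebysheff function ψ(x) = Σ ℓ(i), the (finite) sum over all pairs (i,k) with i ∈ ι, k ≥ 1 an integer, and e^{k·ℓ(i)} ≤ x. Then π(x) ∼ x/log x as x → ∞ (i.e. π(x)·log(x)/x → 1) if and only if ψ(x) ∼ x as x → ∞ (i.e. ψ(x)/x → 1). -/

import Mathlib

open Filter Real Set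

namespace PGT

variable {ι : Type*}

lemma finA (ℓ : ι → ℝ) (hfin : ∀ x : ℝ, {i : ι | ℓ i ≤ x}.Finite) (x : ℝ) :
    {i : ι | Real.exp (ℓ i) ≤ x}.Finite :=
  (hfin x).subset fun i hi => by
    have h := Real.add_one_le_exp (ℓ i)
    simp only [Set.mem_setOf_eq] at hi ⊢
    linarith

noncomputable def A (ℓ : ι → ℝ) (hfin : ∀ x : ℝ, {i : ι | ℓ i ≤ x}.Finite) (x : ℝ) :
    Finset ι := (finA ℓ hfin x).toFinset

lemma mem_A {ℓ : ι → ℝ} {hfin : ∀ x : ℝ, {i : ι | ℓ i ≤ x}.Finite} {x : ℝ} {i : ι} :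
    i ∈ A ℓ hfin x ↔ Real.exp (ℓ i) ≤ x := by simp [A]

lemma finP (ℓ : ι → ℝ) (hpos : ∀ i, 0 < ℓ i) (hfin : ∀ x : ℝ, {i : ι | ℓ i ≤ x}.Finite)
    (x : ℝ) : {p : ι × ℕ | 1 ≤ p.2 ∧ Real.exp ((p.2 : ℝ) * ℓ p.1) ≤ x}.Finite := by
  apply Set.Finite.subset (Set.Finite.biUnion (finA ℓ hfin x)
    (fun i _ => (Set.finite_Iic (⌈x / ℓ i⌉₊)).image fun k => ((i, k) : ι × ℕ)))
  rintro ⟨i, k⟩ ⟨hk1, hk2⟩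
  have hl := hpos i
  have hk1' : (1 : ℝ) ≤ (k : ℝ) := by exact_mod_cast hk1
  have h1 : ℓ i ≤ (k : ℝ) * ℓ i := le_mul_of_one_le_left hl.le hk1'
  have h2 : Real.exp (ℓ i) ≤ x := le_trans (Real.exp_le_exp.2 h1) hk2
  have h3 : (k : ℝ) * ℓ i ≤ x := by
    have := Real.add_one_le_exp ((k : ℝ) * ℓ i); linarith
  have h4 : (k : ℝ) ≤ x / ℓ i := (le_div_iff₀ hl).2 h3
  have h5 : k ≤ ⌈x / ℓ i⌉₊ := by exact_mod_cast h4.trans (Nat.le_ceil _)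
  exact Set.mem_biUnion (show i ∈ {i : ι | Real.exp (ℓ i) ≤ x} from h2)
    ⟨k, Set.mem_Iic.2 h5, rfl⟩

noncomputable def PF (ℓ : ι → ℝ) (hpos : ∀ i, 0 < ℓ i)
    (hfin : ∀ x : ℝ, {i : ι | ℓ i ≤ x}.Finite) (x : ℝ) : Finset (ι × ℕ) :=
  (finP ℓ hpos hfin x).toFinset

lemma mem_PF {ℓ : ι → ℝ} {hpos : ∀ i, 0 < ℓ i} {hfin : ∀ x : ℝ, {i : ι | ℓ i ≤ x}.Finite}
    {x : ℝ} {p : ι × ℕ} :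
    p ∈ PF ℓ hpos hfin x ↔ 1 ≤ p.2 ∧ Real.exp ((p.2 : ℝ) * ℓ p.1) ≤ x := by
  simp [PF]


variable (ℓ : ι → ℝ) (hpos : ∀ i, 0 < ℓ i) (hfin : ∀ x : ℝ, {i : ι | ℓ i ≤ x}.Finite)

noncomputable def piR (x : ℝ) : ℝ := ((A ℓ hfin x).card : ℝ)

noncomputable def theta (x : ℝ) : ℝ := ∑ i ∈ A ℓ hfin x, ℓ i

noncomputable def psi (x : ℝ) : ℝ := ∑ p ∈ PF ℓ hpos hfin x, ℓ p.1

variable {ℓ}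

lemma piR_eq (x : ℝ) :
    (Nat.card {i : ι | Real.exp (ℓ i) ≤ x} : ℝ) = piR ℓ hfin x := by
  rw [piR, Nat.card_coe_set_eq, Set.ncard_eq_toFinset_card _ (finA ℓ hfin x)]; rfl

lemma psi_eq (x : ℝ) :
    (∑ᶠ p ∈ {p : ι × ℕ | 1 ≤ p.2 ∧ Real.exp ((p.2 : ℝ) * ℓ p.1) ≤ x}, ℓ p.1)
      = psi ℓ hpos hfin x := by
  rw [psi, finsum_mem_eq_finite_toFinset_sum _ (finP ℓ hpos hfin x)]; rfl

lemma piR_nonneg (x : ℝ) : 0 ≤ piR ℓ hfin x := Nat.cast_nonneg _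

include hpos in
lemma theta_nonneg (x : ℝ) : 0 ≤ theta ℓ hfin x :=
  Finset.sum_nonneg fun i _ => (hpos i).le

lemma A_mono {x y : ℝ} (h : y ≤ x) : A ℓ hfin y ⊆ A ℓ hfin x := fun i hi =>
  mem_A.2 ((mem_A.1 hi).trans h)

lemma piR_mono {x y : ℝ} (h : y ≤ x) : piR ℓ hfin y ≤ piR ℓ hfin x := by
  rw [piR, piR]
  exact_mod_cast Finset.card_le_card (A_mono hfin h)

/-- θ ≤ ψ -/
lemma theta_le_psi (x : ℝ) : theta ℓ hfin x ≤ psi ℓ hpos hfin x := by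
  classical
  rw [theta, psi]
  have hinj : Set.InjOn (fun i => ((i, 1) : ι × ℕ)) (A ℓ hfin x) := fun a _ b _ h => by
    simpa using h
  have himg := Finset.sum_image (f := fun p : ι × ℕ => ℓ p.1)
    (g := fun i => ((i, 1) : ι × ℕ)) (s := A ℓ hfin x)
    (fun a ha b hb h => hinj ha hb h)
  rw [← himg]
  apply Finset.sum_le_sum_of_subset_of_nonneg
  · intro p hp
    obtain ⟨i, hi, rfl⟩ := Finset.mem_image.1 hp
    refine mem_PF.2 ⟨le_refl 1, ?_⟩
    simpa using mem_A.1 hi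
  · intro p _ _; exact (hpos p.1).le

/-- θ(x) ≤ π(x) log x for x ≥ 1 -/
lemma theta_le_pi_log {x : ℝ} (hx : 1 ≤ x) :
    theta ℓ hfin x ≤ piR ℓ hfin x * Real.log x := by
  have h := Finset.sum_le_card_nsmul (A ℓ hfin x) ℓ (Real.log x) ?_
  · rw [nsmul_eq_mul] at h; exact h
  · intro i hi
    exact (Real.le_log_iff_exp_le (lt_of_lt_of_le one_pos hx)).2 (mem_A.1 hi)

include hpos in
/-- (π(x) − π(y)) log y ≤ θ(x) for 1 < y ≤ x -/
lemma key_lower {x y : ℝ} (hy : 1 < y) (hyx : y ≤ x) :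
    (piR ℓ hfin x - piR ℓ hfin y) * Real.log y ≤ theta ℓ hfin x := by
  classical
  set D := A ℓ hfin x \ A ℓ hfin y with hD
  have hsub : D ⊆ A ℓ hfin x := Finset.sdiff_subset
  have h1 : ∑ i ∈ D, ℓ i ≤ theta ℓ hfin x :=
    Finset.sum_le_sum_of_subset_of_nonneg hsub fun i _ _ => (hpos i).le
  have h2 : (D.card : ℝ) * Real.log y ≤ ∑ i ∈ D, ℓ i := by
    have := Finset.card_nsmul_le_sum D ℓ (Real.log y) ?_
    · rwa [nsmul_eq_mul] at this
    · intro i hi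
      have hni : ¬ Real.exp (ℓ i) ≤ y := fun h => (Finset.mem_sdiff.1 hi).2 (mem_A.2 h)
      push_neg at hni
      have := Real.log_lt_log (lt_trans one_pos hy) hni
      rw [Real.log_exp] at this
      exact this.le
  have hcard : (D.card : ℝ) = piR ℓ hfin x - piR ℓ hfin y := by
    rw [hD, Finset.card_sdiff_of_subset (A_mono hfin hyx), piR, piR,
      Nat.cast_sub (Finset.card_le_card (A_mono hfin hyx))]
  calc (piR ℓ hfin x - piR ℓ hfin y) * Real.log y
      = (D.card : ℝ) * Real.log y := by rw [hcard]
    _ ≤ ∑ i ∈ D, ℓ i := h2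
    _ ≤ theta ℓ hfin x := h1

include hpos in
/-- π(x) ≤ C₀ + θ(x) -/
lemma pi_le_theta (x : ℝ) :
    piR ℓ hfin x ≤ ((hfin 1).toFinset.card : ℝ) + theta ℓ hfin x := by
  classical
  have hsplit := Finset.card_filter_add_card_filter_not
    (s := A ℓ hfin x) (p := fun i => ℓ i ≤ 1)
  have h1 : ((A ℓ hfin x).filter (fun i => ℓ i ≤ 1)).card ≤ (hfin 1).toFinset.card := by
    apply Finset.card_le_card
    intro i hi
    simp only [Finset.mem_filter] at hi
    simpa using hi.2
  have h2 : (((A ℓ hfin x).filter (fun i => ¬ ℓ i ≤ 1)).card : ℝ) ≤ theta ℓ hfin x := by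
    have hb := Finset.card_nsmul_le_sum ((A ℓ hfin x).filter (fun i => ¬ ℓ i ≤ 1))
      ℓ 1 ?_
    · rw [nsmul_eq_mul, mul_one] at hb
      refine hb.trans ?_
      exact Finset.sum_le_sum_of_subset_of_nonneg (Finset.filter_subset _ _)
        fun i _ _ => (hpos i).le
    · intro i hi
      simp only [Finset.mem_filter] at hi
      linarith [hi.2, not_le.1 hi.2]
  have := hsplit
  rw [piR]
  push_cast [← hsplit]
  have h1' : (((A ℓ hfin x).filter (fun i => ℓ i ≤ 1)).card : ℝ)
      ≤ ((hfin 1).toFinset.card : ℝ) := by exact_mod_cast h1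
  linarith


include hpos in
/-- ψ(x) ≤ θ(x) + π(√x) log x for x ≥ 1 -/
lemma psi_le {x : ℝ} (hx : 1 ≤ x) :
    psi ℓ hpos hfin x ≤ theta ℓ hfin x + piR ℓ hfin (Real.sqrt x) * Real.log x := by
  classical
  have hx0 : (0 : ℝ) < x := lt_of_lt_of_le one_pos hx
  have hlog0 : 0 ≤ Real.log x := Real.log_nonneg hx
  set Q := (PF ℓ hpos hfin x).filter (fun p => p.2 ≠ 1) with hQ
  -- split psi
  have hsplit : psi ℓ hpos hfin x
      = (∑ p ∈ (PF ℓ hpos hfin x).filter (fun p => p.2 = 1), ℓ p.1)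
        + ∑ p ∈ Q, ℓ p.1 := by
    rw [psi, hQ, Finset.sum_filter_add_sum_filter_not]
  -- the k = 1 part equals theta
  have h1 : (∑ p ∈ (PF ℓ hpos hfin x).filter (fun p => p.2 = 1), ℓ p.1)
      = theta ℓ hfin x := by
    have hset : (PF ℓ hpos hfin x).filter (fun p => p.2 = 1)
        = (A ℓ hfin x).image (fun i => ((i, 1) : ι × ℕ)) := by
      ext ⟨i, k⟩
      simp only [Finset.mem_filter, mem_PF, Finset.mem_image, mem_A]
      constructor
      · rintro ⟨⟨-, h2⟩, rfl⟩
        refine ⟨i, ?_, rfl⟩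
        simpa using h2
      · rintro ⟨j, hj, h⟩
        obtain ⟨rfl, rfl⟩ : j = i ∧ (1 : ℕ) = k := by
          constructor <;> [exact congrArg Prod.fst h; exact congrArg Prod.snd h]
        exact ⟨⟨le_refl 1, by simpa using hj⟩, rfl⟩
    rw [hset, Finset.sum_image (fun a _ b _ h => by simpa using congrArg Prod.fst h)]
    rfl
  -- the k ≥ 2 part
  have h2 : (∑ p ∈ Q, ℓ p.1) ≤ piR ℓ hfin (Real.sqrt x) * Real.log x := by
    have hcomp : (∑ p ∈ Q, ℓ p.1)
        = ∑ i ∈ Q.image Prod.fst, ((Q.filter (fun p => p.1 = i)).card) • ℓ i :=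
      Finset.sum_comp ℓ Prod.fst
    rw [hcomp]
    -- each fiber contributes at most log x
    have hterm : ∀ i ∈ Q.image Prod.fst,
        ((Q.filter (fun p => p.1 = i)).card) • ℓ i ≤ Real.log x := by
      intro i hi
      obtain ⟨p, hp, rfl⟩ := Finset.mem_image.1 hi
      have hcard : (Q.filter (fun q => q.1 = p.1)).card
          ≤ ⌊Real.log x / ℓ p.1⌋₊ := by
        have : (Q.filter (fun q => q.1 = p.1)).card
            ≤ (Finset.Icc 1 ⌊Real.log x / ℓ p.1⌋₊).card := by
          apply Finset.card_le_card_of_injOn Prod.snd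
          · intro q hq
            simp only [Finset.mem_coe, Finset.mem_filter, hQ, mem_PF] at hq
            obtain ⟨⟨⟨hq1, hq2⟩, -⟩, hqi⟩ := hq
            refine Finset.mem_Icc.2 ⟨hq1, Nat.le_floor ?_⟩
            have hklog : (q.2 : ℝ) * ℓ q.1 ≤ Real.log x :=
              (Real.le_log_iff_exp_le hx0).2 hq2
            rw [hqi] at hklog
            exact (le_div_iff₀ (hpos p.1)).2 hklog
          · intro a ha b hb hab
            simp only [Finset.coe_filter, Set.mem_setOf_eq] at ha hb
            exact Prod.ext (ha.2.trans hb.2.symm) hab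
        simpa using this
      have hfl : (⌊Real.log x / ℓ p.1⌋₊ : ℝ) * ℓ p.1 ≤ Real.log x := by
        have h0 : 0 ≤ Real.log x / ℓ p.1 := div_nonneg hlog0 (hpos p.1).le
        have := Nat.floor_le h0
        calc (⌊Real.log x / ℓ p.1⌋₊ : ℝ) * ℓ p.1
            ≤ (Real.log x / ℓ p.1) * ℓ p.1 := by
              exact mul_le_mul_of_nonneg_right this (hpos p.1).le
          _ = Real.log x := div_mul_cancel₀ _ (hpos p.1).ne'
      rw [nsmul_eq_mul]
      calc ((Q.filter (fun q => q.1 = p.1)).card : ℝ) * ℓ p.1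
          ≤ (⌊Real.log x / ℓ p.1⌋₊ : ℝ) * ℓ p.1 := by
            exact mul_le_mul_of_nonneg_right (by exact_mod_cast hcard) (hpos p.1).le
        _ ≤ Real.log x := hfl
    have hsum := Finset.sum_le_card_nsmul (Q.image Prod.fst) _ (Real.log x) hterm
    rw [nsmul_eq_mul] at hsum
    refine hsum.trans ?_
    apply mul_le_mul_of_nonneg_right _ hlog0
    -- image ⊆ A(√x)
    have hsubset : Q.image Prod.fst ⊆ A ℓ hfin (Real.sqrt x) := by
      intro i hi
      obtain ⟨p, hp, rfl⟩ := Finset.mem_image.1 hi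
      simp only [hQ, Finset.mem_filter, mem_PF] at hp
      obtain ⟨⟨hp1, hp2⟩, hpne⟩ := hp
      have hk2 : 2 ≤ p.2 := by omega
      have h2l : (2 : ℝ) * ℓ p.1 ≤ (p.2 : ℝ) * ℓ p.1 := by
        have : (2 : ℝ) ≤ (p.2 : ℝ) := by exact_mod_cast hk2
        exact mul_le_mul_of_nonneg_right this (hpos p.1).le
      have : Real.exp (ℓ p.1) ^ 2 ≤ x := by
        rw [← Real.exp_nat_mul]
        exact le_trans (Real.exp_le_exp.2 (by push_cast; linarith)) hp2
      exact mem_A.2 (Real.le_sqrt_of_sq_le this)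
    rw [piR]
    exact_mod_cast Finset.card_le_card hsubset
  linarith [hsplit, h1, h2]


lemma tendsto_log_div_rpow {c : ℝ} (hc : 0 < c) :
    Tendsto (fun x : ℝ => Real.log x / x ^ c) atTop (nhds 0) :=
  (isLittleO_log_rpow_atTop hc).tendsto_div_nhds_zero

lemma tendsto_log_div : Tendsto (fun x : ℝ => Real.log x / x) atTop (nhds 0) :=
  (tendsto_log_div_rpow one_pos).congr fun x => by rw [Real.rpow_one]

include hpos in
/-- If θ(x) ≤ 2x eventually, then π(x^c) log x / x → 0 for 0 < c < 1. -/
lemma pi_rpow_tendsto (h2 : ∀ᶠ x : ℝ in atTop, theta ℓ hfin x ≤ 2 * x) {c : ℝ}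
    (hc0 : 0 < c) (hc1 : c < 1) :
    Tendsto (fun x : ℝ => piR ℓ hfin (x ^ c) * Real.log x / x) atTop (nhds 0) := by
  set C : ℝ := ((hfin 1).toFinset.card : ℝ) with hCdef
  have hC : 0 ≤ C := Nat.cast_nonneg _
  have hbound : ∀ᶠ x : ℝ in atTop,
      piR ℓ hfin (x ^ c) * Real.log x / x
        ≤ C * (Real.log x / x) + 2 * (Real.log x / x ^ (1 - c)) := by
    filter_upwards [(tendsto_rpow_atTop hc0).eventually h2, eventually_ge_atTop 1]
      with x hx hx1
    have hx0 : (0 : ℝ) < x := lt_of_lt_of_le one_pos hx1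
    have hlog0 : 0 ≤ Real.log x := Real.log_nonneg hx1
    have hpi : piR ℓ hfin (x ^ c) ≤ C + 2 * x ^ c :=
      (pi_le_theta hpos hfin _).trans (by linarith)
    have hxc : (0 : ℝ) < x ^ c := Real.rpow_pos_of_pos hx0 c
    have h1c : x ^ (1 - c) = x / x ^ c := by
      rw [Real.rpow_sub hx0, Real.rpow_one]
    calc piR ℓ hfin (x ^ c) * Real.log x / x
        ≤ (C + 2 * x ^ c) * Real.log x / x := by gcongr
      _ = C * (Real.log x / x) + 2 * (Real.log x / x ^ (1 - c)) := by
          rw [h1c]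
          field_simp
  have h0 : ∀ᶠ x : ℝ in atTop, 0 ≤ piR ℓ hfin (x ^ c) * Real.log x / x := by
    filter_upwards [eventually_ge_atTop 1] with x hx1
    have hx0 : (0 : ℝ) < x := lt_of_lt_of_le one_pos hx1
    exact div_nonneg (mul_nonneg (piR_nonneg hfin _) (Real.log_nonneg hx1)) hx0.le
  have hlim : Tendsto (fun x : ℝ =>
      C * (Real.log x / x) + 2 * (Real.log x / x ^ (1 - c))) atTop (nhds 0) := by
    have := (tendsto_log_div.const_mul C).add
      ((tendsto_log_div_rpow (by linarith : (0:ℝ) < 1 - c)).const_mul 2)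
    simpa using this
  exact tendsto_of_tendsto_of_tendsto_of_le_of_le' tendsto_const_nhds hlim h0 hbound


include hpos in
/-- π → θ direction -/
lemma theta_of_pi
    (hπ : Tendsto (fun x : ℝ => piR ℓ hfin x * Real.log x / x) atTop (nhds 1)) :
    Tendsto (fun x : ℝ => theta ℓ hfin x / x) atTop (nhds 1) := by
  have h2 : ∀ᶠ x : ℝ in atTop, theta ℓ hfin x ≤ 2 * x := by
    filter_upwards [hπ.eventually_lt_const (by norm_num : (1:ℝ) < 2),
      eventually_ge_atTop 1] with x hx hx1
    have hx0 : (0:ℝ) < x := by linarith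
    have h3 := theta_le_pi_log hfin hx1
    rw [div_lt_iff₀ hx0] at hx
    linarith
  rw [tendsto_order]
  constructor
  · intro b hb
    set ε : ℝ := min (1/2) ((1 - b)/2) with hε
    have hε0 : 0 < ε := lt_min (by norm_num) (by linarith)
    have hε1 : ε < 1 := lt_of_le_of_lt (min_le_left _ _) (by norm_num)
    have hεb : b < 1 - ε := by
      have h := min_le_right (1/2 : ℝ) ((1 - b)/2)
      rw [← hε] at h
      linarith
    have hK := pi_rpow_tendsto hpos hfin h2
      (by linarith : (0:ℝ) < 1 - ε) (by linarith : (1:ℝ) - ε < 1)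
    have hlim : Tendsto (fun x : ℝ => (1 - ε) * (piR ℓ hfin x * Real.log x / x
        - piR ℓ hfin (x ^ (1 - ε)) * Real.log x / x)) atTop (nhds ((1 - ε) * (1 - 0))) :=
      (hπ.sub hK).const_mul _
    have hev := hlim.eventually_const_lt (show b < (1 - ε) * (1 - 0) by
      rw [sub_zero, mul_one]; exact hεb)
    filter_upwards [hev, eventually_gt_atTop 1] with x hx hx1
    have hx0 : (0:ℝ) < x := by linarith
    have hy1 : 1 < x ^ (1 - ε) :=
      (Real.one_lt_rpow_iff_of_pos hx0).2 (Or.inl ⟨hx1, by linarith⟩)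
    have hyx : x ^ (1 - ε) ≤ x := by
      calc x ^ (1 - ε) ≤ x ^ (1:ℝ) :=
            Real.rpow_le_rpow_of_exponent_le hx1.le (by linarith)
        _ = x := Real.rpow_one x
    have hkey := key_lower hpos hfin hy1 hyx
    rw [Real.log_rpow hx0] at hkey
    refine lt_of_lt_of_le hx ?_
    have h3 : (1 - ε) * (piR ℓ hfin x * Real.log x
        - piR ℓ hfin (x ^ (1 - ε)) * Real.log x) ≤ theta ℓ hfin x := by
      calc (1 - ε) * (piR ℓ hfin x * Real.log x - piR ℓ hfin (x ^ (1 - ε)) * Real.log x)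
          = (piR ℓ hfin x - piR ℓ hfin (x ^ (1 - ε))) * ((1 - ε) * Real.log x) := by ring
        _ ≤ theta ℓ hfin x := hkey
    calc (1 - ε) * (piR ℓ hfin x * Real.log x / x
            - piR ℓ hfin (x ^ (1 - ε)) * Real.log x / x)
        = ((1 - ε) * (piR ℓ hfin x * Real.log x
            - piR ℓ hfin (x ^ (1 - ε)) * Real.log x)) / x := by ring
      _ ≤ theta ℓ hfin x / x := by gcongr
  · intro b hb
    filter_upwards [hπ.eventually_lt_const hb, eventually_ge_atTop 1] with x hx hx1
    have hx0 : (0:ℝ) < x := by linarith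
    have h3 := theta_le_pi_log hfin hx1
    have h4 : theta ℓ hfin x / x ≤ piR ℓ hfin x * Real.log x / x := by gcongr
    linarith

include hpos in
/-- θ → π direction -/
lemma pi_of_theta (hθ : Tendsto (fun x : ℝ => theta ℓ hfin x / x) atTop (nhds 1)) :
    Tendsto (fun x : ℝ => piR ℓ hfin x * Real.log x / x) atTop (nhds 1) := by
  have h2 : ∀ᶠ x : ℝ in atTop, theta ℓ hfin x ≤ 2 * x := by
    filter_upwards [hθ.eventually_lt_const (by norm_num : (1:ℝ) < 2),
      eventually_gt_atTop 0] with x hx hx0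
    rw [div_lt_iff₀ hx0] at hx
    linarith
  rw [tendsto_order]
  constructor
  · intro b hb
    filter_upwards [hθ.eventually_const_lt hb, eventually_ge_atTop 1] with x hx hx1
    have hx0 : (0:ℝ) < x := by linarith
    have h3 := theta_le_pi_log hfin hx1
    have h4 : theta ℓ hfin x / x ≤ piR ℓ hfin x * Real.log x / x := by gcongr
    linarith
  · intro b hb
    have hb0 : (0:ℝ) < b := lt_trans one_pos hb
    set ε : ℝ := (1 - 1/b)/2 with hε
    have h1b : 1/b < 1 := by rw [div_lt_one hb0]; exact hb
    have h1b0 : 0 < 1/b := by positivity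
    have hε0 : 0 < ε := by rw [hε]; linarith
    have hε1 : ε < 1 := by rw [hε]; linarith
    have h1e : 1/b < 1 - ε := by rw [hε]; linarith
    have hinv : 1/(1 - ε) < b := by
      rw [div_lt_iff₀ (by linarith : (0:ℝ) < 1 - ε)]
      have hbb : b * (1/b) = 1 := by field_simp
      nlinarith
    have hK := pi_rpow_tendsto hpos hfin h2
      (by linarith : (0:ℝ) < 1 - ε) (by linarith : (1:ℝ) - ε < 1)
    have hθ' : Tendsto (fun x : ℝ => theta ℓ hfin x / x / (1 - ε)) atTop
        (nhds (1 / (1 - ε))) := hθ.div_const _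
    have hlim := hK.add hθ'
    have hev := hlim.eventually_lt_const (show (0:ℝ) + 1/(1 - ε) < b by linarith)
    filter_upwards [hev, eventually_gt_atTop 1] with x hx hx1
    have hx0 : (0:ℝ) < x := by linarith
    have hy1 : 1 < x ^ (1 - ε) :=
      (Real.one_lt_rpow_iff_of_pos hx0).2 (Or.inl ⟨hx1, by linarith⟩)
    have hyx : x ^ (1 - ε) ≤ x := by
      calc x ^ (1 - ε) ≤ x ^ (1:ℝ) :=
            Real.rpow_le_rpow_of_exponent_le hx1.le (by linarith)
        _ = x := Real.rpow_one x
    have hkey := key_lower hpos hfin hy1 hyx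
    rw [Real.log_rpow hx0] at hkey
    have he : (0:ℝ) < 1 - ε := by linarith
    have h5 : (piR ℓ hfin x - piR ℓ hfin (x ^ (1 - ε))) * Real.log x
        ≤ theta ℓ hfin x / (1 - ε) := by
      rw [le_div_iff₀ he]
      calc (piR ℓ hfin x - piR ℓ hfin (x ^ (1 - ε))) * Real.log x * (1 - ε)
          = (piR ℓ hfin x - piR ℓ hfin (x ^ (1 - ε))) * ((1 - ε) * Real.log x) := by ring
        _ ≤ theta ℓ hfin x := hkey
    have hstep : piR ℓ hfin x * Real.log x / x
        ≤ piR ℓ hfin (x ^ (1 - ε)) * Real.log x / x + theta ℓ hfin x / x / (1 - ε) := by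
      have h4 : piR ℓ hfin x * Real.log x
          ≤ piR ℓ hfin (x ^ (1 - ε)) * Real.log x + theta ℓ hfin x / (1 - ε) := by
        linarith
      calc piR ℓ hfin x * Real.log x / x
          ≤ (piR ℓ hfin (x ^ (1 - ε)) * Real.log x + theta ℓ hfin x / (1 - ε)) / x := by
            gcongr
        _ = piR ℓ hfin (x ^ (1 - ε)) * Real.log x / x + theta ℓ hfin x / x / (1 - ε) := by
            ring
    linarith

include hpos in
lemma pi_sqrt_tendsto (h2 : ∀ᶠ x : ℝ in atTop, theta ℓ hfin x ≤ 2 * x) :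
    Tendsto (fun x : ℝ => piR ℓ hfin (Real.sqrt x) * Real.log x / x) atTop (nhds 0) := by
  have hK := pi_rpow_tendsto hpos hfin h2
    (by norm_num : (0:ℝ) < 1/2) (by norm_num : (1:ℝ)/2 < 1)
  apply hK.congr'
  filter_upwards [eventually_ge_atTop (0:ℝ)] with x hx
  rw [Real.sqrt_eq_rpow]

include hpos in
/-- θ → ψ direction -/
lemma psi_of_theta (hθ : Tendsto (fun x : ℝ => theta ℓ hfin x / x) atTop (nhds 1)) :
    Tendsto (fun x : ℝ => psi ℓ hpos hfin x / x) atTop (nhds 1) := by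
  have h2 : ∀ᶠ x : ℝ in atTop, theta ℓ hfin x ≤ 2 * x := by
    filter_upwards [hθ.eventually_lt_const (by norm_num : (1:ℝ) < 2),
      eventually_gt_atTop 0] with x hx hx0
    rw [div_lt_iff₀ hx0] at hx
    linarith
  have hK := pi_sqrt_tendsto hpos hfin h2
  rw [tendsto_order]
  constructor
  · intro b hb
    filter_upwards [hθ.eventually_const_lt hb, eventually_gt_atTop 0] with x hx hx0
    have h3 : theta ℓ hfin x / x ≤ psi ℓ hpos hfin x / x := by
      gcongr
      exact theta_le_psi hpos hfin x
    linarith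
  · intro b hb
    have hlim := hθ.add hK
    have hev := hlim.eventually_lt_const (show (1:ℝ) + 0 < b by linarith)
    filter_upwards [hev, eventually_ge_atTop 1] with x hx hx1
    have hx0 : (0:ℝ) < x := by linarith
    have h3 := psi_le hpos hfin hx1
    have h4 : psi ℓ hpos hfin x / x
        ≤ theta ℓ hfin x / x + piR ℓ hfin (Real.sqrt x) * Real.log x / x := by
      rw [← add_div]
      gcongr
    linarith

include hpos in
/-- ψ → θ direction -/
lemma theta_of_psi (hψ : Tendsto (fun x : ℝ => psi ℓ hpos hfin x / x) atTop (nhds 1)) :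
    Tendsto (fun x : ℝ => theta ℓ hfin x / x) atTop (nhds 1) := by
  have h2 : ∀ᶠ x : ℝ in atTop, theta ℓ hfin x ≤ 2 * x := by
    filter_upwards [hψ.eventually_lt_const (by norm_num : (1:ℝ) < 2),
      eventually_gt_atTop 0] with x hx hx0
    rw [div_lt_iff₀ hx0] at hx
    have := theta_le_psi hpos hfin x
    linarith
  have hK := pi_sqrt_tendsto hpos hfin h2
  rw [tendsto_order]
  constructor
  · intro b hb
    have hlim := hψ.sub hK
    have hev := hlim.eventually_const_lt (show b < (1:ℝ) - 0 by linarith)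
    filter_upwards [hev, eventually_ge_atTop 1] with x hx hx1
    have hx0 : (0:ℝ) < x := by linarith
    have h3 := psi_le hpos hfin hx1
    have h4 : psi ℓ hpos hfin x / x
        ≤ theta ℓ hfin x / x + piR ℓ hfin (Real.sqrt x) * Real.log x / x := by
      rw [← add_div]
      gcongr
    linarith
  · intro b hb
    filter_upwards [hψ.eventually_lt_const hb, eventually_gt_atTop 0] with x hx hx0
    have h3 : theta ℓ hfin x / x ≤ psi ℓ hpos hfin x / x := by
      gcongr
      exact theta_le_psi hpos hfin x
    linarith

end PGT

/-- Equivalence of the prime geodesic theorem with its Chebysheff form: for lengths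
`ℓ(i) > 0` with finitely many below any bound (and infinitely many in total), the
counting function `π(x) = #{i : e^{ℓ(i)} ≤ x}` satisfies `π(x) ~ x/log x` iff the
Chebysheff function `ψ(x) = Σ_{(i,k) : k ≥ 1, e^{k ℓ(i)} ≤ x} ℓ(i)` satisfies
`ψ(x) ~ x`. -/
theorem prime_geodesic_theorem_iff_chebyshev {ι : Type*} [Infinite ι] (ℓ : ι → ℝ)
    (hpos : ∀ i, 0 < ℓ i) (hfin : ∀ x : ℝ, {i : ι | ℓ i ≤ x}.Finite) :
    Tendsto (fun x : ℝ =>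
        (Nat.card {i : ι | Real.exp (ℓ i) ≤ x} : ℝ) * Real.log x / x)
      atTop (nhds 1) ↔
    Tendsto (fun x : ℝ =>
        (∑ᶠ p ∈ {p : ι × ℕ | 1 ≤ p.2 ∧ Real.exp ((p.2 : ℝ) * ℓ p.1) ≤ x}, ℓ p.1) / x)
      atTop (nhds 1) := by
  have e1 : (fun x : ℝ =>
      (Nat.card {i : ι | Real.exp (ℓ i) ≤ x} : ℝ) * Real.log x / x)
      = fun x : ℝ => PGT.piR ℓ hfin x * Real.log x / x := by
    funext x; rw [PGT.piR_eq]
  have e2 : (fun x : ℝ =>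
      (∑ᶠ p ∈ {p : ι × ℕ | 1 ≤ p.2 ∧ Real.exp ((p.2 : ℝ) * ℓ p.1) ≤ x}, ℓ p.1) / x)
      = fun x : ℝ => PGT.psi ℓ hpos hfin x / x := by
    funext x; rw [PGT.psi_eq]
  rw [e1, e2]
  constructor
  · intro h
    exact PGT.psi_of_theta hpos hfin (PGT.theta_of_pi hpos hfin h)
  · intro h
    exact PGT.pi_of_theta hpos hfin (PGT.theta_of_psi hpos hfin h)
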